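/- Let n, k be positive integers, A an n×n complex matrix, μ : {1,…,k} → ℂ, and ψ₁,…,ψₖ ∈ ℂⁿ row vectors that are left eigenvectors of A, i.e., ψₗᵀA = μₗ ψₗᵀ (equivalently vecMul ψₗ A = μₗ • ψₗ) for each l. Define p : ℂⁿ → ℂ by p(z) = ∏_{l=1}^{k} ⟨ψₗ, z⟩, where ⟨ψ, z⟩ = Σᵢ ψᵢ zᵢ. Then for every z ∈ ℂⁿ, the Fréchet derivative of p at z evaluated in the direction Az satisfies Dp(z)[Az] = (μ₁ + ⋯ + μₖ) · p(z). In other words, the homogeneous degree-k polynomial function p is an eigenfunction, with eigenvalue μ₁ + ⋯ + μₖ, of the Lie derivative operator p ↦ Dp(z)[Az]. -/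
import Mathlib

open Matrix

theorem product_of_left_eigenfunctions_is_eigenfunction
    (n k : ℕ) (hn : 0 < n) (hk : 0 < k)
    (A : Matrix (Fin n) (Fin n) ℂ)
    (μ : Fin k → ℂ) (ψ : Fin k → Fin n → ℂ)
    (hψ : ∀ l, Matrix.vecMul (ψ l) A = μ l • ψ l) :
    ∀ z : Fin n → ℂ,
      fderiv ℂ (fun w : Fin n → ℂ => ∏ l, (ψ l ⬝ᵥ w)) z (A.mulVec z)
        = (∑ l, μ l) * ∏ l, (ψ l ⬝ᵥ z) := by
  intro z
  set D : Fin k → (Fin n → ℂ) →L[ℂ] ℂ :=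
    fun i => ∑ j, ψ i j • ContinuousLinearMap.proj j with hD
  have hDapp : ∀ i w, D i w = ψ i ⬝ᵥ w := by
    intro i w
    simp [hD, dotProduct, ContinuousLinearMap.sum_apply, smul_eq_mul]
  have hderiv : ∀ i ∈ Finset.univ, HasFDerivAt (fun w : Fin n → ℂ => ψ i ⬝ᵥ w) (D i) z := by
    intro i _
    have := (D i).hasFDerivAt (x := z)
    exact this.congr_fderiv rfl |>.congr_of_eventuallyEq
      (Filter.Eventually.of_forall fun w => (hDapp i w).symm)
  have hprod := HasFDerivAt.finset_prod (u := Finset.univ) hderiv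
  rw [hprod.fderiv]
  rw [ContinuousLinearMap.sum_apply]
  have key : ∀ i, ψ i ⬝ᵥ A.mulVec z = μ i * (ψ i ⬝ᵥ z) := by
    intro i
    rw [Matrix.dotProduct_mulVec, hψ i, smul_dotProduct, smul_eq_mul]
  calc ∑ i, ((∏ j ∈ Finset.univ.erase i, ψ j ⬝ᵥ z) • D i) (A.mulVec z)
      = ∑ i, μ i * ((∏ j ∈ Finset.univ.erase i, ψ j ⬝ᵥ z) * (ψ i ⬝ᵥ z)) := by
        refine Finset.sum_congr rfl fun i _ => ?_
        rw [ContinuousLinearMap.smul_apply, hDapp, key, smul_eq_mul]; ring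
    _ = ∑ i, μ i * ∏ l, (ψ l ⬝ᵥ z) := by
        refine Finset.sum_congr rfl fun i _ => ?_
        rw [Finset.prod_erase_mul _ _ (Finset.mem_univ i)]
    _ = (∑ l, μ l) * ∏ l, (ψ l ⬝ᵥ z) := by rw [Finset.sum_mul]
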